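/- Fix S, K, σ, r, τ > 0 and ρ ∈ (−1, 1), and let μ̃ ∈ ℝ. Define δ(α) = r − μ̃ + α√(1−ρ²)σ and let P^α(S) = K e^{−rτ} Φ(d₂(α)) − S e^{−δ(α)τ} Φ(d₁(α)) be the Black-Scholes put price with dividend yield δ(α), where d₂(α) = (ln(K/S) − (r − δ(α) − σ²/2)τ)/(σ√τ) and d₁(α) = (ln(K/S) − (r − δ(α) + σ²/2)τ)/(σ√τ). Then α ↦ P^α(S) is non-decreasing on [0, ∞). -/

import Mathlib

open MeasureTheory Real

noncomputable def stdNormalCDF (x : ℝ) : ℝ :=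
  ∫ t in Set.Iic x, Real.exp (-t^2/2) / Real.sqrt (2*Real.pi)

noncomputable def gauss (t : ℝ) : ℝ := Real.exp (-t^2/2) / Real.sqrt (2*Real.pi)

lemma gauss_integrable : Integrable gauss := by
  have h := integrable_exp_neg_mul_sq (b := (1/2 : ℝ)) (by norm_num)
  have : gauss = fun t => Real.exp (-(1/2) * t^2) * (Real.sqrt (2*Real.pi))⁻¹ := by
    funext t; unfold gauss; rw [div_eq_mul_inv]; ring_nf
  rw [this]
  exact h.mul_const _

lemma gauss_cont : Continuous gauss := by
  unfold gauss; fun_prop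

lemma stdNormalCDF_nonneg (x : ℝ) : 0 ≤ stdNormalCDF x := by
  unfold stdNormalCDF
  apply setIntegral_nonneg measurableSet_Iic
  intro t _; positivity

lemma hasDerivAt_stdNormalCDF (x : ℝ) : HasDerivAt stdNormalCDF (gauss x) x := by
  have heq : ∀ y : ℝ, stdNormalCDF y = stdNormalCDF 0 + ∫ t in (0:ℝ)..y, gauss t := by
    intro y
    have := intervalIntegral.integral_Iic_sub_Iic
      (gauss_integrable.integrableOn (s := Set.Iic (0:ℝ)))
      (gauss_integrable.integrableOn (s := Set.Iic y))
    unfold stdNormalCDF gauss at *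
    linarith [this]
  have : HasDerivAt (fun y => stdNormalCDF 0 + ∫ t in (0:ℝ)..y, gauss t) (gauss x) x := by
    apply HasDerivAt.const_add
    exact intervalIntegral.integral_hasDerivAt_right
      (gauss_integrable.intervalIntegrable)
      (gauss_cont.stronglyMeasurableAtFilter _ _) gauss_cont.continuousAt
  exact this.congr_of_eventuallyEq (by filter_upwards with y; exact heq y)

/-- The seller's put price is non-decreasing in the instantaneous Sharpe ratio `α`. -/
theorem stmt5 (S K σ r τ ρ μt : ℝ) (hS : 0 < S) (hK : 0 < K) (hσ : 0 < σ) (hr : 0 < r)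
    (hτ : 0 < τ) (hρ : ρ ∈ Set.Ioo (-1 : ℝ) 1) :
    MonotoneOn (fun α : ℝ =>
      K * Real.exp (-r*τ) *
        stdNormalCDF ((Real.log (K/S)
          - (r - (r - μt + α * Real.sqrt (1 - ρ^2) * σ) - σ^2/2)*τ)/(σ*Real.sqrt τ))
      - S * Real.exp (-(r - μt + α * Real.sqrt (1 - ρ^2) * σ)*τ) *
        stdNormalCDF ((Real.log (K/S)
          - (r - (r - μt + α * Real.sqrt (1 - ρ^2) * σ) + σ^2/2)*τ)/(σ*Real.sqrt τ)))
      (Set.Ici 0) := by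
  have hc : 0 < Real.sqrt (1 - ρ^2) * σ := by
    apply mul_pos _ hσ
    apply Real.sqrt_pos.2
    nlinarith [hρ.1, hρ.2]
  have hst : Real.sqrt τ ^ 2 = τ := Real.sq_sqrt hτ.le
  have hstpos : 0 < Real.sqrt τ := Real.sqrt_pos.2 hτ
  -- key identity
  have key : ∀ a : ℝ,
      K * Real.exp (-r*τ) * gauss ((Real.log (K/S)
          - (r - (r - μt + a * Real.sqrt (1 - ρ^2) * σ) - σ^2/2)*τ)/(σ*Real.sqrt τ))
      = S * Real.exp (-(r - μt + a * Real.sqrt (1 - ρ^2) * σ)*τ) * gauss ((Real.log (K/S)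
          - (r - (r - μt + a * Real.sqrt (1 - ρ^2) * σ) + σ^2/2)*τ)/(σ*Real.sqrt τ)) := by
    intro a
    set q : ℝ := r - μt + a * Real.sqrt (1 - ρ^2) * σ with hqdef
    have harg : Real.log K + -r*τ + -(((Real.log (K/S) - (r - q - σ^2/2)*τ)/(σ*Real.sqrt τ))^2)/2
        = Real.log S + -q*τ + -(((Real.log (K/S) - (r - q + σ^2/2)*τ)/(σ*Real.sqrt τ))^2)/2 := by
      rw [Real.log_div hK.ne' hS.ne', div_pow, div_pow, mul_pow, hst]
      have hne : σ^2 * τ ≠ 0 := by positivity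
      field_simp
      ring
    have h2 : K * Real.exp (-r*τ) *
          Real.exp (-(((Real.log (K/S) - (r - q - σ^2/2)*τ)/(σ*Real.sqrt τ))^2)/2)
        = S * Real.exp (-q*τ) *
          Real.exp (-(((Real.log (K/S) - (r - q + σ^2/2)*τ)/(σ*Real.sqrt τ))^2)/2) := by
      rw [show K * Real.exp (-r*τ) *
            Real.exp (-(((Real.log (K/S) - (r - q - σ^2/2)*τ)/(σ*Real.sqrt τ))^2)/2)
          = Real.exp (Real.log K + -r*τ +
              -(((Real.log (K/S) - (r - q - σ^2/2)*τ)/(σ*Real.sqrt τ))^2)/2) by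
        rw [Real.exp_add, Real.exp_add, Real.exp_log hK]]
      rw [show S * Real.exp (-q*τ) *
            Real.exp (-(((Real.log (K/S) - (r - q + σ^2/2)*τ)/(σ*Real.sqrt τ))^2)/2)
          = Real.exp (Real.log S + -q*τ +
              -(((Real.log (K/S) - (r - q + σ^2/2)*τ)/(σ*Real.sqrt τ))^2)/2) by
        rw [Real.exp_add, Real.exp_add, Real.exp_log hS]]
      exact congrArg Real.exp harg
    unfold gauss
    rw [show -(q)*τ = -q*τ by ring]
    linear_combination h2 / Real.sqrt (2*Real.pi)
  -- derivative at every point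
  have hder : ∀ a : ℝ, HasDerivAt (fun α : ℝ =>
      K * Real.exp (-r*τ) *
        stdNormalCDF ((Real.log (K/S)
          - (r - (r - μt + α * Real.sqrt (1 - ρ^2) * σ) - σ^2/2)*τ)/(σ*Real.sqrt τ))
      - S * Real.exp (-(r - μt + α * Real.sqrt (1 - ρ^2) * σ)*τ) *
        stdNormalCDF ((Real.log (K/S)
          - (r - (r - μt + α * Real.sqrt (1 - ρ^2) * σ) + σ^2/2)*τ)/(σ*Real.sqrt τ)))
      (S * Real.exp (-(r - μt + a * Real.sqrt (1 - ρ^2) * σ)*τ) * (Real.sqrt (1 - ρ^2) * σ * τ) *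
        stdNormalCDF ((Real.log (K/S)
          - (r - (r - μt + a * Real.sqrt (1 - ρ^2) * σ) + σ^2/2)*τ)/(σ*Real.sqrt τ))) a := by
    intro a
    have hq : HasDerivAt (fun α : ℝ => r - μt + α * Real.sqrt (1 - ρ^2) * σ)
        (Real.sqrt (1 - ρ^2) * σ) a := by
      simpa using (((hasDerivAt_id a).mul_const (Real.sqrt (1 - ρ^2))).mul_const σ).const_add (r - μt)
    have hd2 : HasDerivAt (fun α : ℝ => (Real.log (K/S)
        - (r - (r - μt + α * Real.sqrt (1 - ρ^2) * σ) - σ^2/2)*τ)/(σ*Real.sqrt τ))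
        (Real.sqrt (1 - ρ^2) * σ * τ / (σ*Real.sqrt τ)) a := by
      have := ((((hq.const_sub r).sub_const (σ^2/2)).mul_const τ).const_sub
        (Real.log (K/S))).div_const (σ*Real.sqrt τ)
      refine this.congr_deriv ?_
      ring
    have hΦ2 := (hasDerivAt_stdNormalCDF _).comp a hd2
    have hE : HasDerivAt (fun α : ℝ => Real.exp (-(r - μt + α * Real.sqrt (1 - ρ^2) * σ)*τ))
        (Real.exp (-(r - μt + a * Real.sqrt (1 - ρ^2) * σ)*τ) * (-(Real.sqrt (1 - ρ^2) * σ)*τ)) a := by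
      have := (hq.neg.mul_const τ).exp
      simp only [Pi.neg_apply] at this
      convert this using 2 <;> ring
    have hd1 : HasDerivAt (fun α : ℝ => (Real.log (K/S)
        - (r - (r - μt + α * Real.sqrt (1 - ρ^2) * σ) + σ^2/2)*τ)/(σ*Real.sqrt τ))
        (Real.sqrt (1 - ρ^2) * σ * τ / (σ*Real.sqrt τ)) a := by
      have := ((((hq.const_sub r).add_const (σ^2/2)).mul_const τ).const_sub
        (Real.log (K/S))).div_const (σ*Real.sqrt τ)
      refine this.congr_deriv ?_
      ring
    have hΦ1 := (hasDerivAt_stdNormalCDF _).comp a hd1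
    have hF := ((hΦ2.const_mul (K * Real.exp (-r*τ))).sub ((hE.const_mul S).mul hΦ1))
    have hD : S * Real.exp (-(r - μt + a * Real.sqrt (1 - ρ^2) * σ)*τ) *
          (Real.sqrt (1 - ρ^2) * σ * τ) *
        stdNormalCDF ((Real.log (K/S)
          - (r - (r - μt + a * Real.sqrt (1 - ρ^2) * σ) + σ^2/2)*τ)/(σ*Real.sqrt τ))
        = K * Real.exp (-r*τ) *
            (gauss ((Real.log (K/S)
              - (r - (r - μt + a * Real.sqrt (1 - ρ^2) * σ) - σ^2/2)*τ)/(σ*Real.sqrt τ)) *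
              (Real.sqrt (1 - ρ^2) * σ * τ / (σ*Real.sqrt τ)))
          - (S * (Real.exp (-(r - μt + a * Real.sqrt (1 - ρ^2) * σ)*τ) *
              (-(Real.sqrt (1 - ρ^2) * σ)*τ)) *
             stdNormalCDF ((Real.log (K/S)
              - (r - (r - μt + a * Real.sqrt (1 - ρ^2) * σ) + σ^2/2)*τ)/(σ*Real.sqrt τ))
            + S * Real.exp (-(r - μt + a * Real.sqrt (1 - ρ^2) * σ)*τ) *
              (gauss ((Real.log (K/S)
                - (r - (r - μt + a * Real.sqrt (1 - ρ^2) * σ) + σ^2/2)*τ)/(σ*Real.sqrt τ)) *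
                (Real.sqrt (1 - ρ^2) * σ * τ / (σ*Real.sqrt τ)))) := by
      linear_combination (-(Real.sqrt (1 - ρ^2) * σ * τ / (σ*Real.sqrt τ))) * key a
    rw [hD]
    exact hF
  have hmono : Monotone (fun α : ℝ =>
      K * Real.exp (-r*τ) *
        stdNormalCDF ((Real.log (K/S)
          - (r - (r - μt + α * Real.sqrt (1 - ρ^2) * σ) - σ^2/2)*τ)/(σ*Real.sqrt τ))
      - S * Real.exp (-(r - μt + α * Real.sqrt (1 - ρ^2) * σ)*τ) *
        stdNormalCDF ((Real.log (K/S)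
          - (r - (r - μt + α * Real.sqrt (1 - ρ^2) * σ) + σ^2/2)*τ)/(σ*Real.sqrt τ))) := by
    apply monotone_of_deriv_nonneg (fun a => (hder a).differentiableAt)
    intro a
    rw [(hder a).deriv]
    have h1 := stdNormalCDF_nonneg ((Real.log (K/S)
          - (r - (r - μt + a * Real.sqrt (1 - ρ^2) * σ) + σ^2/2)*τ)/(σ*Real.sqrt τ))
    have h2 : 0 < S * Real.exp (-(r - μt + a * Real.sqrt (1 - ρ^2) * σ)*τ) *
        (Real.sqrt (1 - ρ^2) * σ * τ) := by positivity
    exact mul_nonneg h2.le h1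
  exact hmono.monotoneOn _
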